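/- Let d, Q ≥ 1 be integers and let r ≥ Q be an integer. Then for all integers 1 ≤ i ≤ j ≤ Q, the set S = σ_i ∪ σ_{i+1} ∪ … ∪ σ_j satisfies dens_{T_r}(S) = dens_{T_{r−Q}}(S) + (2^d − 1)/d. -/

import Mathlib

/-- The block `σ_i = {id+1, id+2, …, (i+1)d}` of vertices. -/
def sigmaB (d i : ℕ) : Finset ℕ := Finset.Icc (i * d + 1) ((i + 1) * d)

/-- The `d`-tree `T_0` on vertex set `{1, …, d(Q+1)}`: its simplices are the nonempty
subsets `σ` with `max σ − min σ ≤ d` (equivalently, `a ≤ b + d` for all `a, b ∈ σ`). -/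
def T0 (d Q : ℕ) : Finset (Finset ℕ) :=
  (Finset.Icc 1 (d * (Q + 1))).powerset.filter
    (fun σ => σ.Nonempty ∧ ∀ a ∈ σ, ∀ b ∈ σ, a ≤ b + d)

/-- The `k`-th attached root vertex (for `k = 0, 1, …`): a fresh vertex label. -/
def rootVtx (d Q k : ℕ) : ℕ := d * (Q + 1) + k + 1

/-- The index of the block to which the `k`-th root vertex is attached in `T_r`
(`k = 0, …, r−1`).  Writing `r = aQ + b` with `b = r % Q`, the first `b` vertices are
attached to `σ_{⌈Q/b⌉}, σ_{⌈2Q/b⌉}, …, σ_{⌈bQ/b⌉} = σ_Q` (coming from the base case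
`T_b`), and the remaining `aQ` vertices are attached cyclically to `σ_1, …, σ_Q`
(`a` full rounds), corresponding to the recursion `T_r = T_{r−Q} + (σ_1, …, σ_Q)`. -/
def target (Q r k : ℕ) : ℕ :=
  if k < r % Q then ((k + 1) * Q + (r % Q) - 1) / (r % Q)
  else (k - r % Q) % Q + 1

/-- The rooted `d`-tree `T_r`: the complex `T_0` together with, for each `k < r`, the
root vertex `rootVtx d Q k` attached to the `(d−1)`-simplex `σ_{target Q r k}`
(attaching adds all sets `τ ∪ {v}` for `τ ⊆ σ`). -/
def Tr (d Q r : ℕ) : Finset (Finset ℕ) :=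
  T0 d Q ∪ (Finset.range r).biUnion
    (fun k => (sigmaB d (target Q r k)).powerset.image (insert (rootVtx d Q k)))

/-- The set of vertex roots of `T_r`. -/
def rootSet (d Q r : ℕ) : Finset ℕ := (Finset.range r).image (rootVtx d Q)

/-- `e_C(S)`: the number of nonempty simplices of `C` with at least one vertex in `S`. -/
def eCount (C : Finset (Finset ℕ)) (S : Finset ℕ) : ℕ :=
  (C.filter (fun σ => σ.Nonempty ∧ (σ ∩ S).Nonempty)).card

/-- The density `dens_C(S) = e_C(S)/|S|`. -/
noncomputable def dens (C : Finset (Finset ℕ)) (S : Finset ℕ) : ℝ :=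
  (eCount C S : ℝ) / (S.card : ℝ)

/-- The vertex set of a complex. -/
def verts (C : Finset (Finset ℕ)) : Finset ℕ := C.sup id

/-- The unrooted vertices of `T_r`: all vertices except the simplex root `σ_0` and the
vertex roots. -/
def unrooted (d Q r : ℕ) : Finset ℕ :=
  verts (Tr d Q r) \ (sigmaB d 0 ∪ rootSet d Q r)

/-! ### Auxiliary lemmas -/

lemma sigmaB_card (d t : ℕ) : (sigmaB d t).card = d := by
  have h : (t + 1) * d = t * d + d := by ring
  simp [sigmaB, Nat.card_Icc, h]

lemma mem_sigmaB {d t x : ℕ} : x ∈ sigmaB d t ↔ t * d + 1 ≤ x ∧ x ≤ (t + 1) * d :=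
  Finset.mem_Icc

lemma sigmaB_disjoint {d s t : ℕ} (h : s ≠ t) : Disjoint (sigmaB d s) (sigmaB d t) := by
  rw [Finset.disjoint_left]
  intro x hx hx'
  rw [mem_sigmaB] at hx hx'
  rcases Nat.lt_or_ge s t with h1 | h1
  · have : (s + 1) * d ≤ t * d := Nat.mul_le_mul_right _ (by omega)
    omega
  · have h2 : s > t := by omega
    have : (t + 1) * d ≤ s * d := Nat.mul_le_mul_right _ (by omega)
    omega

lemma sigmaB_le {d t x : ℕ} {Q : ℕ} (ht : t ≤ Q) (hx : x ∈ sigmaB d t) :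
    1 ≤ x ∧ x ≤ d * (Q + 1) := by
  rw [mem_sigmaB] at hx
  have : (t + 1) * d ≤ (Q + 1) * d := Nat.mul_le_mul_right _ (by omega)
  have h2 : (Q + 1) * d = d * (Q + 1) := by ring
  omega

lemma target_sub {Q r : ℕ} (hr : Q ≤ r) (k : ℕ) : target Q (r - Q) k = target Q r k := by
  have h : r % Q = (r - Q) % Q := Nat.mod_eq_sub_mod hr
  unfold target
  rw [h]

lemma target_le {Q : ℕ} (r k : ℕ) (hQ : 1 ≤ Q) : target Q r k ≤ Q := by
  unfold target
  split
  · rename_i hk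
    set b := r % Q with hb
    have hb0 : 0 < b := by omega
    have h1 : (k + 1) * Q ≤ b * Q := Nat.mul_le_mul_right _ (by omega)
    calc ((k + 1) * Q + b - 1) / b ≤ (b * Q + (b - 1)) / b :=
          Nat.div_le_div_right (by omega)
      _ = Q + (b - 1) / b := Nat.mul_add_div hb0 _ _
      _ = Q := by rw [Nat.div_eq_of_lt (by omega), Nat.add_zero]
  · have := Nat.mod_lt (k - r % Q) (show 0 < Q by omega)
    omega

lemma target_pos {Q : ℕ} (r k : ℕ) (hQ : 1 ≤ Q) : 1 ≤ target Q r k := by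
  unfold target
  split
  · rename_i hk
    have hb0 : 0 < r % Q := by omega
    rw [Nat.one_le_div_iff hb0]
    have : 1 * 1 ≤ (k + 1) * Q := Nat.mul_le_mul (by omega) hQ
    omega
  · omega

lemma target_eq_of_ge {Q r k : ℕ} (h : r % Q ≤ k) :
    target Q r k = (k - r % Q) % Q + 1 := by
  unfold target
  rw [if_neg (by omega)]

lemma attach_count (v : ℕ) (A S : Finset ℕ) (hvA : v ∉ A) (hvS : v ∉ S) :
    ((A.powerset.image (insert v)).filter
        (fun σ => σ.Nonempty ∧ (σ ∩ S).Nonempty)).card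
      = (A.powerset.filter (fun τ => (τ ∩ S).Nonempty)).card := by
  rw [Finset.filter_image]
  rw [Finset.card_image_of_injOn]
  · congr 1
    apply Finset.filter_congr
    intro τ hτ
    rw [Finset.mem_powerset] at hτ
    have hvτ : v ∉ τ := fun h => hvA (hτ h)
    rw [Finset.insert_inter_of_notMem hvS]
    simp
  · intro a ha b hb hab
    simp only [Finset.coe_filter, Set.mem_setOf_eq, Finset.mem_powerset] at ha hb
    have hva : v ∉ a := fun h => hvA (ha.1 h)
    have hvb : v ∉ b := fun h => hvA (hb.1 h)
    have := congrArg (fun s => Finset.erase s v) hab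
    simpa [Finset.erase_insert hva, Finset.erase_insert hvb] using this

lemma count_sub (A S : Finset ℕ) (h : A ⊆ S) :
    (A.powerset.filter (fun τ => (τ ∩ S).Nonempty)).card = 2 ^ A.card - 1 := by
  have heq : A.powerset.filter (fun τ => (τ ∩ S).Nonempty)
      = A.powerset.filter (fun τ => τ ≠ ∅) := by
    apply Finset.filter_congr
    intro τ hτ
    rw [Finset.mem_powerset] at hτ
    rw [Finset.inter_eq_left.mpr (hτ.trans h), Finset.nonempty_iff_ne_empty]
  rw [heq, Finset.filter_ne', Finset.card_erase_of_mem (Finset.empty_mem_powerset _),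
    Finset.card_powerset]

lemma count_empty (A S : Finset ℕ) (h : ∀ x ∈ A, x ∉ S) :
    (A.powerset.filter (fun τ => (τ ∩ S).Nonempty)).card = 0 := by
  rw [Finset.card_eq_zero, Finset.filter_eq_empty_iff]
  intro τ hτ
  rw [Finset.mem_powerset] at hτ
  rintro ⟨x, hx⟩
  rw [Finset.mem_inter] at hx
  exact h x (hτ hx.1) hx.2

/-- The family of simplices attached with the `k`-th root vertex. -/
def attachF (d Q r k : ℕ) : Finset (Finset ℕ) :=
  (sigmaB d (target Q r k)).powerset.image (insert (rootVtx d Q k))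

lemma Tr_eq (d Q r : ℕ) :
    Tr d Q r = T0 d Q ∪ (Finset.range r).biUnion (attachF d Q r) := rfl

lemma attachF_congr {d Q r : ℕ} (hr : Q ≤ r) (k : ℕ) :
    attachF d Q (r - Q) k = attachF d Q r k := by
  unfold attachF
  rw [target_sub hr]

lemma Tr_decomp (d Q r : ℕ) (hr : Q ≤ r) :
    Tr d Q r = Tr d Q (r - Q) ∪ (Finset.Ico (r - Q) r).biUnion (attachF d Q r) := by
  rw [Tr_eq, Tr_eq]
  have h1 : (Finset.range (r - Q)).biUnion (attachF d Q (r - Q))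
      = (Finset.range (r - Q)).biUnion (attachF d Q r) :=
    Finset.biUnion_congr rfl (fun k _ => attachF_congr hr k)
  have hrange : Finset.range r = Finset.range (r - Q) ∪ Finset.Ico (r - Q) r := by
    simp only [Finset.range_eq_Ico]
    exact (Finset.Ico_union_Ico_eq_Ico (Nat.zero_le _) (by omega)).symm
  have hbu : (Finset.range (r - Q) ∪ Finset.Ico (r - Q) r).biUnion (attachF d Q r)
      = (Finset.range (r - Q)).biUnion (attachF d Q r)
        ∪ (Finset.Ico (r - Q) r).biUnion (attachF d Q r) := by
    ext σ
    simp only [Finset.mem_biUnion, Finset.mem_union]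
    constructor
    · rintro ⟨k, hk | hk, hσ⟩
      · exact Or.inl ⟨k, hk, hσ⟩
      · exact Or.inr ⟨k, hk, hσ⟩
    · rintro (⟨k, hk, hσ⟩ | ⟨k, hk, hσ⟩)
      · exact ⟨k, Or.inl hk, hσ⟩
      · exact ⟨k, Or.inr hk, hσ⟩
  rw [h1, hrange, hbu, Finset.union_assoc]

lemma mem_Tr_bound {d Q s : ℕ} (hQ : 1 ≤ Q) {σ : Finset ℕ} (hσ : σ ∈ Tr d Q s)
    {x : ℕ} (hx : x ∈ σ) : x ≤ d * (Q + 1) + s := by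
  rw [Tr_eq, Finset.mem_union] at hσ
  rcases hσ with h | h
  · unfold T0 at h
    rw [Finset.mem_filter, Finset.mem_powerset] at h
    have := h.1 hx
    rw [Finset.mem_Icc] at this
    omega
  · rw [Finset.mem_biUnion] at h
    obtain ⟨k, hk, hσ'⟩ := h
    rw [Finset.mem_range] at hk
    unfold attachF at hσ'
    rw [Finset.mem_image] at hσ'
    obtain ⟨τ, hτ, rfl⟩ := hσ'
    rw [Finset.mem_powerset] at hτ
    rw [Finset.mem_insert] at hx
    rcases hx with rfl | hx
    · unfold rootVtx; omega
    · have := sigmaB_le (target_le s k hQ) (hτ hx)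
      omega

lemma attachF_mem {d Q r k : ℕ} {σ : Finset ℕ} (hQ : 1 ≤ Q) (h : σ ∈ attachF d Q r k) :
    rootVtx d Q k ∈ σ ∧ ∀ x ∈ σ, x = rootVtx d Q k ∨ x ≤ d * (Q + 1) := by
  unfold attachF at h
  rw [Finset.mem_image] at h
  obtain ⟨τ, hτ, rfl⟩ := h
  rw [Finset.mem_powerset] at hτ
  refine ⟨Finset.mem_insert_self _ _, ?_⟩
  intro x hx
  rw [Finset.mem_insert] at hx
  rcases hx with rfl | hx
  · exact Or.inl rfl
  · exact Or.inr (sigmaB_le (target_le r k hQ) (hτ hx)).2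

/-- **Density recursion.** Let `d, Q ≥ 1` and `r ≥ Q`.  For all `1 ≤ i ≤ j ≤ Q`, the
set `S = σ_i ∪ σ_{i+1} ∪ … ∪ σ_j` satisfies
`dens_{T_r}(S) = dens_{T_{r−Q}}(S) + (2^d − 1)/d`. -/
theorem Tr_density_recursion (d Q r : ℕ) (hd : 1 ≤ d) (hQ : 1 ≤ Q) (hr : Q ≤ r)
    (i j : ℕ) (hi : 1 ≤ i) (hij : i ≤ j) (hjQ : j ≤ Q) :
    dens (Tr d Q r) ((Finset.Icc i j).biUnion (sigmaB d)) =
      dens (Tr d Q (r - Q)) ((Finset.Icc i j).biUnion (sigmaB d)) +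
        ((2 : ℝ) ^ d - 1) / (d : ℝ) := by
  set S : Finset ℕ := (Finset.Icc i j).biUnion (sigmaB d) with hS
  -- basic facts about S
  have hSsub : ∀ x ∈ S, 1 ≤ x ∧ x ≤ d * (Q + 1) := by
    intro x hx
    rw [hS, Finset.mem_biUnion] at hx
    obtain ⟨u, hu, hxu⟩ := hx
    rw [Finset.mem_Icc] at hu
    exact sigmaB_le (by omega) hxu
  have hScard : S.card = (j + 1 - i) * d := by
    rw [hS, Finset.card_biUnion (fun x _ y _ hxy => sigmaB_disjoint hxy),
      Finset.sum_congr rfl (fun u _ => sigmaB_card d u), Finset.sum_const,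
      smul_eq_mul, Nat.card_Icc]
  have hsubS : ∀ t ∈ Finset.Icc i j, sigmaB d t ⊆ S := fun t ht =>
    Finset.subset_biUnion_of_mem (sigmaB d) ht
  have houtS : ∀ t, t ∉ Finset.Icc i j → ∀ x ∈ sigmaB d t, x ∉ S := by
    intro t ht x hx hxS
    rw [hS, Finset.mem_biUnion] at hxS
    obtain ⟨u, hu, hxu⟩ := hxS
    have htu : t ≠ u := by rintro rfl; exact ht hu
    exact (Finset.disjoint_left.mp (sigmaB_disjoint htu) hx) hxu
  -- disjointness facts
  have hdisj : Disjoint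
      ((Tr d Q (r - Q)).filter (fun σ => σ.Nonempty ∧ (σ ∩ S).Nonempty))
      (((Finset.Ico (r - Q) r).biUnion (attachF d Q r)).filter
        (fun σ => σ.Nonempty ∧ (σ ∩ S).Nonempty)) := by
    rw [Finset.disjoint_left]
    intro σ h1 h2
    rw [Finset.mem_filter] at h1 h2
    obtain ⟨hmem, -⟩ := h2
    rw [Finset.mem_biUnion] at hmem
    obtain ⟨k, hk, hσ⟩ := hmem
    rw [Finset.mem_Ico] at hk
    have hroot := (attachF_mem hQ hσ).1
    have := mem_Tr_bound hQ h1.1 hroot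
    unfold rootVtx at this
    omega
  have hpair : ∀ k ∈ Finset.Ico (r - Q) r, ∀ k' ∈ Finset.Ico (r - Q) r, k ≠ k' →
      Disjoint ((attachF d Q r k).filter (fun σ => σ.Nonempty ∧ (σ ∩ S).Nonempty))
        ((attachF d Q r k').filter (fun σ => σ.Nonempty ∧ (σ ∩ S).Nonempty)) := by
    intro k _ k' _ hkk'
    rw [Finset.disjoint_left]
    intro σ h1 h2
    rw [Finset.mem_filter] at h1 h2
    have ha := attachF_mem hQ h1.1
    have hb := attachF_mem hQ h2.1
    have := hb.2 _ ha.1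
    unfold rootVtx at this
    omega
  -- per-k count
  have hcount : ∀ k ∈ Finset.Ico (r - Q) r,
      ((attachF d Q r k).filter (fun σ => σ.Nonempty ∧ (σ ∩ S).Nonempty)).card
        = if target Q r k ∈ Finset.Icc i j then 2 ^ d - 1 else 0 := by
    intro k _
    have ht2 := target_le (Q := Q) r k hQ
    have hvS : rootVtx d Q k ∉ S := by
      intro h
      have := hSsub _ h
      unfold rootVtx at this
      omega
    have hvA : rootVtx d Q k ∉ sigmaB d (target Q r k) := by
      intro h
      have := sigmaB_le ht2 h
      unfold rootVtx at this
      omega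
    unfold attachF
    rw [attach_count _ _ _ hvA hvS]
    by_cases hmem : target Q r k ∈ Finset.Icc i j
    · rw [if_pos hmem, count_sub _ _ (hsubS _ hmem), sigmaB_card]
    · rw [if_neg hmem, count_empty _ _ (houtS _ hmem)]
  -- counting the k's whose target lies in [i, j]
  have hble : r % Q ≤ r - Q := by
    have h1 := Nat.div_add_mod r Q
    have h2 : 1 ≤ r / Q := (Nat.one_le_div_iff (by omega)).mpr hr
    have h3 : Q * 1 ≤ Q * (r / Q) := Nat.mul_le_mul_left Q h2
    omega
  have hinj : Set.InjOn (target Q r) (Finset.Ico (r - Q) r : Set ℕ) := by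
    intro k hk k' hk' heq
    simp only [Finset.coe_Ico, Set.mem_Ico] at hk hk'
    rw [target_eq_of_ge (by omega), target_eq_of_ge (by omega)] at heq
    have heq2 : (k - r % Q) % Q = (k' - r % Q) % Q := by omega
    rcases Nat.le_total k k' with h | h
    · have hd2 : Q ∣ (k' - r % Q) - (k - r % Q) := (Nat.modEq_iff_dvd' (by omega)).mp heq2
      have := Nat.eq_zero_of_dvd_of_lt hd2 (by omega)
      omega
    · have hd2 : Q ∣ (k - r % Q) - (k' - r % Q) :=
        (Nat.modEq_iff_dvd' (by omega)).mp heq2.symm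
      have := Nat.eq_zero_of_dvd_of_lt hd2 (by omega)
      omega
  have himg : (Finset.Ico (r - Q) r).image (target Q r) = Finset.Icc 1 Q := by
    apply Finset.eq_of_subset_of_card_le
    · intro t ht
      rw [Finset.mem_image] at ht
      obtain ⟨k, _, rfl⟩ := ht
      rw [Finset.mem_Icc]
      exact ⟨target_pos r k hQ, target_le r k hQ⟩
    · rw [Finset.card_image_of_injOn hinj, Nat.card_Icc, Nat.card_Ico]
      omega
  have himg2 : ((Finset.Ico (r - Q) r).filter
      (fun k => target Q r k ∈ Finset.Icc i j)).image (target Q r) = Finset.Icc i j := by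
    ext t
    simp only [Finset.mem_image, Finset.mem_filter]
    constructor
    · rintro ⟨k, ⟨_, ht⟩, rfl⟩
      exact ht
    · intro ht
      have ht' : t ∈ Finset.Icc 1 Q := by
        rw [Finset.mem_Icc] at ht ⊢
        omega
      rw [← himg, Finset.mem_image] at ht'
      obtain ⟨k, hk, rfl⟩ := ht'
      exact ⟨k, ⟨hk, ht⟩, rfl⟩
  have hcardA : ((Finset.Ico (r - Q) r).filter
      (fun k => target Q r k ∈ Finset.Icc i j)).card = j + 1 - i := by
    rw [← Finset.card_image_of_injOn
      (hinj.mono (Finset.coe_subset.mpr (Finset.filter_subset _ _))), himg2, Nat.card_Icc]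
  -- the key counting identity
  have hkey : eCount (Tr d Q r) S
      = eCount (Tr d Q (r - Q)) S + (j + 1 - i) * (2 ^ d - 1) := by
    unfold eCount
    rw [Tr_decomp d Q r hr, Finset.filter_union, Finset.card_union_of_disjoint hdisj,
      Finset.filter_biUnion, Finset.card_biUnion hpair]
    congr 1
    rw [Finset.sum_congr rfl hcount, Finset.sum_ite, Finset.sum_const,
      Finset.sum_const_zero, add_zero, smul_eq_mul, hcardA]
  -- final real-number computation
  unfold dens
  rw [hkey, hScard]
  have e1 : ((j + 1 - i : ℕ) : ℝ) = (j : ℝ) + 1 - (i : ℝ) := by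
    rw [Nat.cast_sub (by omega)]
    push_cast
    ring
  have e2 : ((2 ^ d - 1 : ℕ) : ℝ) = 2 ^ d - 1 := by
    rw [Nat.cast_sub Nat.one_le_two_pow]
    push_cast
    ring
  have hmne : (0 : ℝ) < (j : ℝ) + 1 - (i : ℝ) := by
    have h1 : (i : ℝ) ≤ (j : ℝ) := by exact_mod_cast hij
    linarith
  have hdne : ((d : ℝ)) ≠ 0 := Nat.cast_ne_zero.mpr (by omega)
  push_cast [e1, e2]
  field_simp
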